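/- Let n ≥ 1 and let f : ℝⁿ → ℝ be twice continuously differentiable in a neighborhood of a point x ∈ ℝⁿ. Then as ε → 0⁺, ⨍_{B_ε(x)} f(y) dy = f(x) + (ε²/(2(n+2))) · Δf(x) + o(ε²). -/

import Mathlib

open MeasureTheory Metric Set Filter Asymptotics Topology

lemma aux_taylor2 {E : Type*} [NormedAddCommGroup E] [NormedSpace ℝ E]
    {f : E → ℝ} {x : E} {U : Set E} (hU : U ∈ 𝓝 x) (hf : ContDiffOn ℝ 2 f U) :
    (fun y => f y - f x - fderiv ℝ f x (y - x)
      - (1/2) * fderiv ℝ (fderiv ℝ f) x (y - x) (y - x))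
      =o[𝓝 x] (fun y => ‖y - x‖ ^ 2) := by
  have hfx : ContDiffAt ℝ 2 f x := (hf.contDiffAt hU)
  set L := fderiv ℝ f x with hL
  set b := fderiv ℝ (fderiv ℝ f) x with hb
  have hsymm : ∀ v w, b v w = b w v := hfx.isSymmSndFDerivAt (by simp)
  have hdiff : DifferentiableAt ℝ (fderiv ℝ f) x :=
    (hfx.fderiv_right (m := 1) (le_refl 2)).differentiableAt one_ne_zero
  have hder : ∀ᶠ y in 𝓝 x, HasFDerivAt f (fderiv ℝ f y) y := by
    have h1 : ContDiffOn ℝ 2 f (interior U) := hf.mono interior_subset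
    filter_upwards [interior_mem_nhds.2 hU] with y hy
    exact ((h1 y hy).contDiffAt (isOpen_interior.mem_nhds hy)).differentiableAt
      two_ne_zero |>.hasFDerivAt
  have hphi : (fun y => fderiv ℝ f y - L - b (y - x)) =o[𝓝 x] (fun y => y - x) := by
    have h := hdiff.hasFDerivAt
    rw [HasFDerivAt, hasFDerivAtFilter_iff_isLittleO] at h
    simpa [Function.comp_def] using h
  -- derivative of the corrected function at points where f is differentiable
  have key : ∀ z : E, HasFDerivAt f (fderiv ℝ f z) z → HasFDerivAt
      (fun y => f y - f x - L (y - x) - (1/2) * b (y - x) (y - x))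
      (fderiv ℝ f z - L - b (z - x)) z := by
    intro z hz
    have hB := b.isBoundedBilinearMap
    have h1 : HasFDerivAt (fun y : E => (y - x, y - x))
        ((ContinuousLinearMap.id ℝ E).prod (ContinuousLinearMap.id ℝ E)) z :=
      HasFDerivAt.prodMk ((hasFDerivAt_id z).sub_const x) ((hasFDerivAt_id z).sub_const x)
    have h2 : HasFDerivAt (fun y : E => b (y - x) (y - x))
        ((hB.deriv (z - x, z - x)).comp
          ((ContinuousLinearMap.id ℝ E).prod (ContinuousLinearMap.id ℝ E))) z :=
      HasFDerivAt.comp (g := fun p : E × E => b p.1 p.2) z (hB.hasFDerivAt (z - x, z - x)) h1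
    have h3 : HasFDerivAt (fun y : E => (1/2 : ℝ) * b (y - x) (y - x))
        ((1/2 : ℝ) • ((hB.deriv (z - x, z - x)).comp
          ((ContinuousLinearMap.id ℝ E).prod (ContinuousLinearMap.id ℝ E)))) z :=
      h2.const_mul _
    have h4 : HasFDerivAt (fun y : E => L (y - x)) (L.comp (ContinuousLinearMap.id ℝ E)) z :=
      L.hasFDerivAt.comp z ((hasFDerivAt_id z).sub_const x)
    have h5 := ((hz.sub_const (f x)).sub h4).sub h3
    refine h5.congr_fderiv ?_
    ext w
    have : hB.deriv (z - x, z - x) (w, w) = b (z - x) w + b w (z - x) :=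
      hB.deriv_apply _ _
    simp only [ContinuousLinearMap.sub_apply, ContinuousLinearMap.smul_apply,
      ContinuousLinearMap.comp_apply, ContinuousLinearMap.prod_apply,
      ContinuousLinearMap.coe_id', id_eq, this, hsymm w (z - x)]
    rw [smul_eq_mul]; ring
  rw [isLittleO_iff]
  intro c hc
  have hev : ∀ᶠ y in 𝓝 x, HasFDerivAt f (fderiv ℝ f y) y ∧
      ‖fderiv ℝ f y - L - b (y - x)‖ ≤ c * ‖y - x‖ := by
    have := isLittleO_iff.1 hphi hc
    filter_upwards [hder, this] with y h1 h2
    exact ⟨h1, by simpa using h2⟩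
  rcases Metric.eventually_nhds_iff_ball.1 hev with ⟨r, hr, hball⟩
  have main : ∀ y ∈ ball x r, ‖f y - f x - L (y - x) - (1/2) * b (y - x) (y - x)‖
      ≤ c * ‖y - x‖ ^ 2 := by
    intro y hy
    set s := closedBall x ‖y - x‖ with hs
    have hsub : s ⊆ ball x r := by
      intro z hz
      rw [mem_closedBall] at hz
      rw [mem_ball] at hy ⊢
      calc dist z x ≤ ‖y - x‖ := hz
        _ = dist y x := (dist_eq_norm y x).symm
        _ < r := hy
    have hderiv : ∀ z ∈ s, HasFDerivWithinAt
        (fun y => f y - f x - L (y - x) - (1/2) * b (y - x) (y - x))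
        (fderiv ℝ f z - L - b (z - x)) s z := fun z hz =>
      (key z (hball z (hsub hz)).1).hasFDerivWithinAt
    have hbound : ∀ z ∈ s, ‖fderiv ℝ f z - L - b (z - x)‖ ≤ c * ‖y - x‖ := by
      intro z hz
      refine le_trans (hball z (hsub hz)).2 ?_
      have : ‖z - x‖ ≤ ‖y - x‖ := by
        simpa [dist_eq_norm] using mem_closedBall.1 hz
      exact mul_le_mul_of_nonneg_left this hc.le
    have hxmem : x ∈ s := mem_closedBall_self (norm_nonneg _)
    have hymem : y ∈ s := by rw [mem_closedBall, dist_eq_norm]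
    have := (convex_closedBall x ‖y - x‖).norm_image_sub_le_of_norm_hasFDerivWithin_le
      hderiv hbound hxmem hymem
    simpa [pow_two, mul_assoc] using this
  filter_upwards [ball_mem_nhds x hr] with y hy
  have := main y hy
  calc ‖f y - f x - L (y - x) - 1/2 * b (y - x) (y - x)‖ ≤ c * ‖y - x‖ ^ 2 := this
    _ = c * ‖‖y - x‖ ^ 2‖ := by rw [norm_pow, norm_norm]

variable {n : ℕ}

lemma aux_nontrivial (hn : 1 ≤ n) : Nontrivial (EuclideanSpace ℝ (Fin n)) := by
  refine ⟨⟨0, EuclideanSpace.single ⟨0, hn⟩ 1, fun h => ?_⟩⟩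
  have := congrFun (congrArg (fun v : EuclideanSpace ℝ (Fin n) => (v : Fin n → ℝ)) h) ⟨0, hn⟩
  simp [EuclideanSpace.single_apply] at this

lemma aux_comp_isometry
    (T : EuclideanSpace ℝ (Fin n) ≃ₗᵢ[ℝ] EuclideanSpace ℝ (Fin n))
    (h : EuclideanSpace ℝ (Fin n) → ℝ) (ε : ℝ) :
    ∫ z in ball (0 : EuclideanSpace ℝ (Fin n)) ε, h (T z) = ∫ z in ball 0 ε, h z := by
  have hT := T.measurePreserving
  have hemb : MeasurableEmbedding T := T.toHomeomorph.measurableEmbedding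
  have hpre : T ⁻¹' (ball 0 ε) = ball 0 ε := by
    ext z
    simp [mem_ball_zero_iff, T.norm_map]
  calc ∫ z in ball (0 : EuclideanSpace ℝ (Fin n)) ε, h (T z)
      = ∫ z in T ⁻¹' (ball 0 ε), h (T z) := by rw [hpre]
    _ = ∫ z in ball 0 ε, h z := hT.setIntegral_preimage_emb hemb h _

lemma aux_shift (x : EuclideanSpace ℝ (Fin n)) (ε : ℝ) (h : EuclideanSpace ℝ (Fin n) → ℝ) :
    ∫ y in ball x ε, h (y - x) = ∫ z in ball (0 : EuclideanSpace ℝ (Fin n)) ε, h z := by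
  rw [← integral_indicator measurableSet_ball, ← integral_indicator measurableSet_ball]
  have heq : ∀ y, (ball x ε).indicator (fun y => h (y - x)) y
      = (ball (0 : EuclideanSpace ℝ (Fin n)) ε).indicator h (y - x) := by
    intro y
    by_cases hy : y ∈ ball x ε
    · rw [indicator_of_mem hy, indicator_of_mem]
      rw [mem_ball_zero_iff]
      rw [mem_ball, dist_eq_norm] at hy
      exact hy
    · rw [indicator_of_notMem hy, indicator_of_notMem]
      rw [mem_ball_zero_iff]
      rw [mem_ball, dist_eq_norm] at hy
      exact hy
  simp_rw [heq]
  exact integral_sub_right_eq_self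
    ((ball (0 : EuclideanSpace ℝ (Fin n)) ε).indicator h) x

lemma aux_odd (L : EuclideanSpace ℝ (Fin n) →L[ℝ] ℝ) (ε : ℝ) :
    ∫ z in ball (0 : EuclideanSpace ℝ (Fin n)) ε, L z = 0 := by
  have := aux_comp_isometry (LinearIsometryEquiv.neg ℝ
    (E := EuclideanSpace ℝ (Fin n))) (fun z => L z) ε
  simp only [LinearIsometryEquiv.coe_neg, map_neg] at this
  have h2 : ∫ z in ball (0 : EuclideanSpace ℝ (Fin n)) ε, -(L z)
      = -∫ z in ball (0 : EuclideanSpace ℝ (Fin n)) ε, L z := integral_neg _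
  linarith [this, h2] 

lemma aux_offdiag {i j : Fin n} (hij : i ≠ j) (ε : ℝ) :
    ∫ z in ball (0 : EuclideanSpace ℝ (Fin n)) ε, z i * z j = 0 := by
  classical
  set T := LinearIsometryEquiv.piLpCongrRight 2
    (fun k : Fin n => if k = i then LinearIsometryEquiv.neg ℝ (E := ℝ)
      else LinearIsometryEquiv.refl ℝ ℝ) with hT
  have hTi : ∀ z : EuclideanSpace ℝ (Fin n), T z i = -(z i) := by
    intro z; simp [hT, LinearIsometryEquiv.piLpCongrRight_apply]
  have hTj : ∀ z : EuclideanSpace ℝ (Fin n), T z j = z j := by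
    intro z
    simp only [hT, LinearIsometryEquiv.piLpCongrRight_apply, PiLp.toLp_apply,
      if_neg (Ne.symm hij), LinearIsometryEquiv.coe_refl, id_eq]
  have := aux_comp_isometry T (fun z => z i * z j) ε
  simp only [hTi, hTj, neg_mul] at this
  have h2 : ∫ z in ball (0 : EuclideanSpace ℝ (Fin n)) ε, -(z i * z j)
      = -∫ z in ball (0 : EuclideanSpace ℝ (Fin n)) ε, z i * z j := integral_neg _
  linarith [this, h2]

lemma aux_diag_eq (i j : Fin n) (ε : ℝ) :
    ∫ z in ball (0 : EuclideanSpace ℝ (Fin n)) ε, (z i)^2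
      = ∫ z in ball (0 : EuclideanSpace ℝ (Fin n)) ε, (z j)^2 := by
  classical
  set T := LinearIsometryEquiv.piLpCongrLeft 2 ℝ ℝ (Equiv.swap i j) with hT
  have hTi : ∀ z : EuclideanSpace ℝ (Fin n), T z i = z j := by
    intro z
    simp only [hT, LinearIsometryEquiv.piLpCongrLeft_apply, Equiv.piCongrLeft'_apply]
    rw [Equiv.symm_swap, Equiv.swap_apply_left]
  have := aux_comp_isometry T (fun z => (z i)^2) ε
  simp only [hTi] at this
  exact this.symm

lemma aux_norm_sq (hn : 1 ≤ n) {ε : ℝ} (hε : 0 < ε) :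
    ∫ z in ball (0 : EuclideanSpace ℝ (Fin n)) ε, ‖z‖^2
      = (n : ℝ) * (volume (ball (0 : EuclideanSpace ℝ (Fin n)) 1)).toReal
        * (ε ^ (n+2) / (n+2)) := by
  haveI : Nontrivial (EuclideanSpace ℝ (Fin n)) := aux_nontrivial hn
  rw [← integral_indicator measurableSet_ball]
  have heq : ∀ z : EuclideanSpace ℝ (Fin n),
      (ball (0 : EuclideanSpace ℝ (Fin n)) ε).indicator (fun z => ‖z‖^2) z
        = (Iio ε).indicator (fun r => r^2) ‖z‖ := by
    intro z
    by_cases hz : z ∈ ball (0 : EuclideanSpace ℝ (Fin n)) ε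
    · rw [indicator_of_mem hz, indicator_of_mem (show ‖z‖ ∈ Iio ε from mem_ball_zero_iff.1 hz)]
    · rw [indicator_of_notMem hz, indicator_of_notMem]
      intro hc
      exact hz (mem_ball_zero_iff.2 hc)

  simp_rw [heq]
  rw [MeasureTheory.integral_fun_norm_addHaar volume ((Iio ε).indicator (fun r => r^2))]
  have hdim : Module.finrank ℝ (EuclideanSpace ℝ (Fin n)) = n := by
    simp [finrank_euclideanSpace]
  rw [hdim]
  have h2 : ∀ y ∈ Ioi (0:ℝ), y ^ (n-1) • (Iio ε).indicator (fun r => r^2) y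
      = (Iio ε).indicator (fun r => r^(n+1)) y := by
    intro y hy
    by_cases h : y ∈ Iio ε
    · rw [indicator_of_mem h, indicator_of_mem h, smul_eq_mul, ← pow_add]
      congr 1
      omega
    · rw [indicator_of_notMem h, indicator_of_notMem h, smul_zero]
  rw [setIntegral_congr_fun measurableSet_Ioi h2,
    setIntegral_indicator measurableSet_Iio, Ioi_inter_Iio,
    ← integral_Ioc_eq_integral_Ioo, ← intervalIntegral.integral_of_le hε.le,
    integral_pow]
  simp only [nsmul_eq_mul, smul_eq_mul]
  push_cast
  simp only [measureReal_def]
  ring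

lemma aux_vol_ball (hn : 1 ≤ n) {ε : ℝ} (hε : 0 < ε) :
    (volume (ball (0 : EuclideanSpace ℝ (Fin n)) ε)).toReal
      = ε ^ n * (volume (ball (0 : EuclideanSpace ℝ (Fin n)) 1)).toReal := by
  haveI : Nontrivial (EuclideanSpace ℝ (Fin n)) := aux_nontrivial hn
  rw [Measure.addHaar_ball volume (0 : EuclideanSpace ℝ (Fin n)) hε.le]
  have hdim : Module.finrank ℝ (EuclideanSpace ℝ (Fin n)) = n := by
    simp [finrank_euclideanSpace]
  rw [hdim, ENNReal.toReal_mul, ENNReal.toReal_ofReal (pow_nonneg hε.le _)]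

lemma aux_integrableOn_ball {g : EuclideanSpace ℝ (Fin n) → ℝ} (hg : Continuous g)
    (x : EuclideanSpace ℝ (Fin n)) (ε : ℝ) : IntegrableOn g (ball x ε) := by
  exact (hg.continuousOn.integrableOn_compact (isCompact_closedBall x ε)).mono_set
    ball_subset_closedBall

lemma aux_diag (hn : 1 ≤ n) (i : Fin n) {ε : ℝ} (hε : 0 < ε) :
    ∫ z in ball (0 : EuclideanSpace ℝ (Fin n)) ε, (z i)^2
      = (volume (ball (0 : EuclideanSpace ℝ (Fin n)) ε)).toReal * ε^2 / (n+2) := by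
  haveI : Nontrivial (EuclideanSpace ℝ (Fin n)) := aux_nontrivial hn
  have hcont : ∀ j : Fin n, Continuous (fun z : EuclideanSpace ℝ (Fin n) => (z j)^2) :=
    fun j => ((EuclideanSpace.proj j).continuous).pow 2
  have hsum : ∑ j : Fin n, ∫ z in ball (0 : EuclideanSpace ℝ (Fin n)) ε, (z j)^2
      = ∫ z in ball (0 : EuclideanSpace ℝ (Fin n)) ε, ‖z‖^2 := by
    rw [← integral_finset_sum _ (fun j _ => aux_integrableOn_ball (hcont j) _ _)]
    refine setIntegral_congr_fun measurableSet_ball (fun z _ => ?_)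
    rw [EuclideanSpace.norm_eq, Real.sq_sqrt]
    · exact (Finset.sum_congr rfl (fun j _ => by rw [Real.norm_eq_abs, sq_abs])).symm
    · exact Finset.sum_nonneg fun j _ => sq_nonneg _
  have hall : ∀ j : Fin n, ∫ z in ball (0 : EuclideanSpace ℝ (Fin n)) ε, (z j)^2
      = ∫ z in ball (0 : EuclideanSpace ℝ (Fin n)) ε, (z i)^2 :=
    fun j => aux_diag_eq j i ε
  have hn' : (n : ℝ) ≠ 0 := Nat.cast_ne_zero.2 (by omega)
  have h1 : (n : ℝ) * ∫ z in ball (0 : EuclideanSpace ℝ (Fin n)) ε, (z i)^2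
      = ∫ z in ball (0 : EuclideanSpace ℝ (Fin n)) ε, ‖z‖^2 := by
    rw [← hsum, Finset.sum_congr rfl fun j _ => hall j, Finset.sum_const,
      Finset.card_univ, Fintype.card_fin, nsmul_eq_mul]
  apply mul_left_cancel₀ hn'
  rw [h1, aux_norm_sq hn hε, aux_vol_ball hn hε, pow_add]
  ring

lemma aux_repr (z : EuclideanSpace ℝ (Fin n)) :
    z = ∑ i, z i • EuclideanSpace.single i 1 := by
  have h := (EuclideanSpace.basisFun (Fin n) ℝ).sum_repr z
  simp only [EuclideanSpace.basisFun_repr, EuclideanSpace.basisFun_apply] at h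
  exact h.symm

lemma aux_quad (hn : 1 ≤ n)
    (b : EuclideanSpace ℝ (Fin n) →L[ℝ] EuclideanSpace ℝ (Fin n) →L[ℝ] ℝ)
    {ε : ℝ} (hε : 0 < ε) :
    ∫ z in ball (0 : EuclideanSpace ℝ (Fin n)) ε, b z z
      = (volume (ball (0 : EuclideanSpace ℝ (Fin n)) ε)).toReal * ε^2 / (n+2)
        * ∑ i, b (EuclideanSpace.single i 1) (EuclideanSpace.single i 1) := by
  have hexp : ∀ z : EuclideanSpace ℝ (Fin n), b z z
      = ∑ i, ∑ j, z i * z j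
          * b (EuclideanSpace.single i 1) (EuclideanSpace.single j 1) := by
    intro z
    conv_lhs => rw [aux_repr z]
    simp only [map_sum, _root_.map_smul, ContinuousLinearMap.sum_apply,
      ContinuousLinearMap.smul_apply, smul_eq_mul]
    rw [Finset.sum_comm]
    refine Finset.sum_congr rfl fun i _ => ?_
    rw [Finset.mul_sum]
    refine Finset.sum_congr rfl fun j _ => ?_
    ring
  have hcont : ∀ i j : Fin n, Continuous (fun z : EuclideanSpace ℝ (Fin n) =>
      z i * z j * b (EuclideanSpace.single i 1) (EuclideanSpace.single j 1)) :=
    fun i j => (((EuclideanSpace.proj i).continuous.mul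
      (EuclideanSpace.proj j).continuous).mul continuous_const)
  rw [setIntegral_congr_fun measurableSet_ball fun z _ => hexp z]
  rw [integral_finset_sum _ (fun i _ => integrable_finset_sum _
    (fun j _ => aux_integrableOn_ball (hcont i j) _ _))]
  have hterm : ∀ i j : Fin n,
      ∫ z in ball (0 : EuclideanSpace ℝ (Fin n)) ε, z i * z j
          * b (EuclideanSpace.single i 1) (EuclideanSpace.single j 1)
      = (∫ z in ball (0 : EuclideanSpace ℝ (Fin n)) ε, z i * z j)
          * b (EuclideanSpace.single i 1) (EuclideanSpace.single j 1) :=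
    fun i j => integral_mul_const _ _
  calc ∑ i, ∫ z in ball (0 : EuclideanSpace ℝ (Fin n)) ε,
        ∑ j, z i * z j * b (EuclideanSpace.single i 1) (EuclideanSpace.single j 1)
      = ∑ i, ∑ j, (∫ z in ball (0 : EuclideanSpace ℝ (Fin n)) ε, z i * z j)
          * b (EuclideanSpace.single i 1) (EuclideanSpace.single j 1) := by
        refine Finset.sum_congr rfl fun i _ => ?_
        rw [integral_finset_sum _ (fun j _ => aux_integrableOn_ball (hcont i j) _ _)]
        exact Finset.sum_congr rfl fun j _ => hterm i j
    _ = ∑ i, (volume (ball (0 : EuclideanSpace ℝ (Fin n)) ε)).toReal * ε^2 / (n+2)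
          * b (EuclideanSpace.single i 1) (EuclideanSpace.single i 1) := by
        refine Finset.sum_congr rfl fun i _ => ?_
        rw [Finset.sum_eq_single i]
        · rw [show (fun z : EuclideanSpace ℝ (Fin n) => z i * z i)
            = fun z : EuclideanSpace ℝ (Fin n) => (z i)^2 from funext fun z => (sq (z i)).symm ▸ by ring]
          rw [aux_diag hn i hε]
        · intro j _ hj
          rw [aux_offdiag (Ne.symm hj) ε, zero_mul]
        · intro h
          exact absurd (Finset.mem_univ i) h
    _ = (volume (ball (0 : EuclideanSpace ℝ (Fin n)) ε)).toReal * ε^2 / (n+2)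
        * ∑ i, b (EuclideanSpace.single i 1) (EuclideanSpace.single i 1) := by
        rw [Finset.mul_sum]

/-- For `f` twice continuously differentiable near `x`, as `ε → 0⁺`,
`⨍_{B_ε(x)} f = f(x) + ε²/(2(n+2)) Δf(x) + o(ε²)`. -/
theorem average_over_ball_expansion
    (n : ℕ) (hn : 1 ≤ n) (f : EuclideanSpace ℝ (Fin n) → ℝ)
    (x : EuclideanSpace ℝ (Fin n))
    (U : Set (EuclideanSpace ℝ (Fin n))) (hU : U ∈ nhds x) (hf : ContDiffOn ℝ 2 f U) :
    (fun ε : ℝ =>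
      (⨍ y in ball x ε, f y) -
        (f x + ε ^ 2 / (2 * ((n : ℝ) + 2)) *
          ∑ i : Fin n, fderiv ℝ (fderiv ℝ f) x
            (EuclideanSpace.single i 1) (EuclideanSpace.single i 1)))
      =o[𝓝[>] (0 : ℝ)] (fun ε => ε ^ 2) := by
  haveI : Nontrivial (EuclideanSpace ℝ (Fin n)) := aux_nontrivial hn
  set L := fderiv ℝ f x with hL
  set b := fderiv ℝ (fderiv ℝ f) x with hb
  set Δ := ∑ i : Fin n, b (EuclideanSpace.single i 1) (EuclideanSpace.single i 1) with hΔ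
  set g := fun y => f y - f x - L (y - x) - (1/2) * b (y - x) (y - x) with hg
  have hTay := aux_taylor2 hU hf
  obtain ⟨r₀, hr₀, hsub⟩ : ∃ r > 0, closedBall x r ⊆ U := nhds_basis_closedBall.mem_iff.1 hU
  have hn2 : ((n : ℝ) + 2) ≠ 0 := by positivity
  have claim : ∀ ε : ℝ, 0 < ε → ε ≤ r₀ →
      (⨍ y in ball x ε, f y) - (f x + ε ^ 2 / (2 * ((n : ℝ) + 2)) * Δ)
        = ⨍ y in ball x ε, g y := by
    intro ε hε hεr
    have hvol : volume (ball x ε) < ⊤ := measure_ball_lt_top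
    have hvolpos : 0 < (volume (ball x ε)).toReal :=
      ENNReal.toReal_pos (measure_ball_pos volume x hε).ne' hvol.ne
    have hIf : IntegrableOn f (ball x ε) :=
      ((hf.continuousOn.mono ((closedBall_subset_closedBall hεr).trans hsub)).integrableOn_compact
        (isCompact_closedBall x ε)).mono_set ball_subset_closedBall
    have c1 : Continuous fun y : EuclideanSpace ℝ (Fin n) => L (y - x) :=
      L.continuous.comp (continuous_id.sub continuous_const)
    have c2 : Continuous fun y : EuclideanSpace ℝ (Fin n) => (1/2 : ℝ) * b (y - x) (y - x) := by
      have hbc : Continuous fun y : EuclideanSpace ℝ (Fin n) => b (y - x) (y - x) :=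
        b.isBoundedBilinearMap.continuous.comp
          ((continuous_id.sub continuous_const).prodMk (continuous_id.sub continuous_const))
      exact continuous_const.mul hbc
    have hIL := aux_integrableOn_ball c1 x ε
    have hIQ := aux_integrableOn_ball c2 x ε
    have hIC : IntegrableOn (fun _ => f x) (ball x ε) :=
      integrableOn_const hvol.ne
    have hIg : IntegrableOn g (ball x ε) := ((hIf.sub hIC).sub hIL).sub hIQ
    have hpt : ∀ y, f y = f x + L (y - x) + (1/2) * b (y - x) (y - x) + g y := by
      intro y; simp only [hg]; ring
    have e1 : ∫ y in ball x ε, f y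
        = (∫ _y in ball x ε, f x) + (∫ y in ball x ε, L (y - x))
          + (∫ y in ball x ε, (1/2 : ℝ) * b (y - x) (y - x)) + ∫ y in ball x ε, g y := by
      have hI2 : IntegrableOn (fun y : EuclideanSpace ℝ (Fin n) => f x + L (y - x))
          (ball x ε) := hIC.add hIL
      have hI3 : IntegrableOn (fun y : EuclideanSpace ℝ (Fin n) =>
          f x + L (y - x) + (1/2 : ℝ) * b (y - x) (y - x)) (ball x ε) := hI2.add hIQ
      rw [setIntegral_congr_fun measurableSet_ball fun y _ => hpt y]
      rw [integral_add hI3 hIg, integral_add hI2 hIQ, integral_add hIC hIL]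
    have e2 : ∫ _y in ball x ε, f x = (volume (ball x ε)).toReal * f x := by
      rw [setIntegral_const, smul_eq_mul]; rfl
    have e3 : ∫ y in ball x ε, L (y - x) = 0 := by
      rw [aux_shift x ε (fun z => L z), aux_odd L ε]
    have e4 : ∫ y in ball x ε, (1/2 : ℝ) * b (y - x) (y - x)
        = (1/2) * ((volume (ball x ε)).toReal * ε^2 / (n+2) * Δ) := by
      rw [integral_const_mul, aux_shift x ε (fun z => b z z), aux_quad hn b hε,
        Measure.addHaar_ball_center volume x ε]
    rw [setAverage_eq, setAverage_eq, measureReal_def, e1, e2, e3, e4, smul_eq_mul, smul_eq_mul]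
    field_simp
    ring
  have hfin : (fun ε : ℝ => ⨍ y in ball x ε, g y) =o[𝓝[>] (0:ℝ)] (fun ε => ε^2) := by
    rw [isLittleO_iff]
    intro c hc
    rcases Metric.eventually_nhds_iff_ball.1 (isLittleO_iff.1 hTay hc) with ⟨r₁, hr₁, hb1⟩
    filter_upwards [Ioo_mem_nhdsGT_of_mem
      (show (0:ℝ) ∈ Ico (0:ℝ) r₁ from ⟨le_rfl, hr₁⟩)] with ε hε
    obtain ⟨hε0, hεr⟩ := hε
    have hvol : volume (ball x ε) < ⊤ := measure_ball_lt_top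
    have hvolpos : 0 < (volume (ball x ε)).toReal :=
      ENNReal.toReal_pos (measure_ball_pos volume x hε0).ne' hvol.ne
    have hbound : ∀ y ∈ ball x ε, ‖g y‖ ≤ c * ε^2 := by
      intro y hy
      refine (hb1 y (ball_subset_ball hεr.le hy)).trans ?_
      have h1 : ‖y - x‖ < ε := by rw [← dist_eq_norm]; exact mem_ball.1 hy
      have h2 : ‖y - x‖^2 ≤ ε^2 := by
        exact pow_le_pow_left₀ (norm_nonneg _) h1.le 2
      have h3 : ‖‖y - x‖^2‖ = ‖y - x‖^2 := by
        rw [Real.norm_eq_abs, abs_of_nonneg (sq_nonneg _)]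
      rw [h3]
      exact mul_le_mul_of_nonneg_left h2 hc.le
    have h4 := MeasureTheory.norm_setIntegral_le_of_norm_le_const hvol hbound
    rw [setAverage_eq, measureReal_def, norm_smul]
    have h5 : ‖((volume (ball x ε)).toReal)⁻¹‖ = ((volume (ball x ε)).toReal)⁻¹ := by
      rw [Real.norm_eq_abs, abs_of_nonneg (inv_nonneg.2 hvolpos.le)]
    rw [h5]
    calc ((volume (ball x ε)).toReal)⁻¹ * ‖∫ y in ball x ε, g y‖
        ≤ ((volume (ball x ε)).toReal)⁻¹ * (c * ε^2 * (volume (ball x ε)).toReal) := by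
          exact mul_le_mul_of_nonneg_left h4 (inv_nonneg.2 hvolpos.le)
      _ = c * ε^2 := by field_simp
      _ = c * ‖ε^2‖ := by rw [Real.norm_eq_abs, abs_of_nonneg (sq_nonneg _)]
  have heq : (fun ε : ℝ =>
      (⨍ y in ball x ε, f y) - (f x + ε ^ 2 / (2 * ((n : ℝ) + 2)) * Δ))
      =ᶠ[𝓝[>] (0:ℝ)] (fun ε => ⨍ y in ball x ε, g y) := by
    filter_upwards [Ioc_mem_nhdsGT_of_mem
      (show (0:ℝ) ∈ Ico (0:ℝ) r₀ from ⟨le_rfl, hr₀⟩)] with ε hε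
    exact claim ε hε.1 hε.2
  exact heq.trans_isLittleO hfin
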